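/- Let ρ_123 be a positive definite density on H_1 ⊗ H_2 ⊗ H_3 with reduced densities ρ_12, ρ_23, ρ_2 (all invertible), and let q > 0. Then S_q(ρ_123) + S_q(ρ_2) ≤ S_q(ρ_12) + S_q(ρ_23) if and only if S_{-ln_q}^U(ρ_123 || ρ_12 ⊗ I_3) ≥ S_{-ln_q}^V(ρ_23 || ρ_2 ⊗ I_3), where U = ρ_123^{(q-1)/2} and V = ρ_23^{(q-1)/2}. -/

import Mathlib

open Matrix Kronecker ComplexOrder

/-- The deformed logarithm (q-logarithm). -/
noncomputable def lnq (q x : ℝ) : ℝ := if q = 1 then Real.log x else (x ^ (q - 1) - 1) / (q - 1)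

/-- Tsallis entropy `S_q(ρ) = -Tr(ρ ln_q ρ)` of a Hermitian matrix, computed from eigenvalues. -/
noncomputable def tsallisEntropy (q : ℝ) {n : Type*} [Fintype n] [DecidableEq n]
    {ρ : Matrix n n ℂ} (hρ : ρ.IsHermitian) : ℝ :=
  -∑ i, hρ.eigenvalues i * lnq q (hρ.eigenvalues i)

/-- `f` applied to a Hermitian matrix via its spectral decomposition. -/
noncomputable def matFun (f : ℝ → ℝ) {n : Type*} [Fintype n] [DecidableEq n]
    {A : Matrix n n ℂ} (hA : A.IsHermitian) : Matrix n n ℂ :=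
  ∑ i, (f (hA.eigenvalues i) : ℂ) •
    Matrix.vecMulVec (hA.eigenvectorBasis i) (star (hA.eigenvectorBasis i))

/-- `f(Δ(σ/ρ))` for the relative modular operator `Δ(σ/ρ) : X ↦ σXρ⁻¹`, via the spectral
decompositions of `ρ` and `σ`. -/
noncomputable def fDelta (f : ℝ → ℝ) {n : Type*} [Fintype n] [DecidableEq n]
    {ρ σ : Matrix n n ℂ} (hρ : ρ.IsHermitian) (hσ : σ.IsHermitian)
    (X : Matrix n n ℂ) : Matrix n n ℂ :=
  ∑ j, ∑ k, (f (hσ.eigenvalues k / hρ.eigenvalues j) : ℂ) •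
    (Matrix.vecMulVec (hσ.eigenvectorBasis k) (star (hσ.eigenvectorBasis k)) * X *
      Matrix.vecMulVec (hρ.eigenvectorBasis j) (star (hρ.eigenvectorBasis j)))

/-- The positive semidefinite square root of a positive semidefinite matrix
(Mathlib's former `Matrix.PosSemidef.sqrt`, removed since; restated with its old definition). -/
noncomputable def Matrix.PosSemidef.sqrt {n : Type*} [Fintype n] [DecidableEq n]
    {A : Matrix n n ℂ} (hA : A.PosSemidef) : Matrix n n ℂ :=
  (hA.1.eigenvectorUnitary : Matrix n n ℂ) *
    diagonal (fun i => ((√(hA.1.eigenvalues i) : ℝ) : ℂ)) *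
    (star hA.1.eigenvectorUnitary : Matrix n n ℂ)

/-- The relative quasi-entropy `S_f^K(ρ||σ) = ⟨Kρ^{1/2}, f(Δ(σ/ρ))(Kρ^{1/2})⟩`. -/
noncomputable def quasiEntropy (f : ℝ → ℝ) {n : Type*} [Fintype n] [DecidableEq n]
    (K : Matrix n n ℂ) {ρ σ : Matrix n n ℂ} (hρ : ρ.PosDef) (hσ : σ.PosDef) : ℝ :=
  (((K * hρ.posSemidef.sqrt)ᴴ * fDelta f hρ.1 hσ.1 (K * hρ.posSemidef.sqrt)).trace).re

/-- Partial trace over the third tensor factor. -/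
noncomputable def ptrace3 {ι1 ι2 ι3 : Type*} [Fintype ι3]
    (A : Matrix (ι1 × ι2 × ι3) (ι1 × ι2 × ι3) ℂ) : Matrix (ι1 × ι2) (ι1 × ι2) ℂ :=
  fun x y => ∑ k, A (x.1, x.2, k) (y.1, y.2, k)

/-- Partial trace over the first tensor factor. -/
noncomputable def ptrace1 {ι1 ι2 ι3 : Type*} [Fintype ι1]
    (A : Matrix (ι1 × ι2 × ι3) (ι1 × ι2 × ι3) ℂ) : Matrix (ι2 × ι3) (ι2 × ι3) ℂ :=
  fun x y => ∑ i, A (i, x.1, x.2) (i, y.1, y.2)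

/-- Partial trace over the first and third tensor factors. -/
noncomputable def ptrace13 {ι1 ι2 ι3 : Type*} [Fintype ι1] [Fintype ι3]
    (A : Matrix (ι1 × ι2 × ι3) (ι1 × ι2 × ι3) ℂ) : Matrix ι2 ι2 ℂ :=
  fun x y => ∑ i, ∑ k, A (i, x, k) (i, y, k)

/-- `M ⊗ I₃`, a matrix on `H₁ ⊗ H₂` extended to `H₁ ⊗ H₂ ⊗ H₃`. -/
noncomputable def tensorI3 {ι1 ι2 ι3 : Type*} [DecidableEq ι3]
    (M : Matrix (ι1 × ι2) (ι1 × ι2) ℂ) : Matrix (ι1 × ι2 × ι3) (ι1 × ι2 × ι3) ℂ :=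
  fun x y => M (x.1, x.2.1) (y.1, y.2.1) * (if x.2.2 = y.2.2 then 1 else 0)


set_option linter.unusedSectionVars false
variable {n : Type*} [Fintype n] [DecidableEq n]

lemma vmv_mul_vmv (u s w t : n → ℂ) :
    vecMulVec u s * vecMulVec w t = (s ⬝ᵥ w) • vecMulVec u t := by
  ext a b
  simp only [mul_apply, vecMulVec_apply, Matrix.smul_apply, dotProduct, smul_eq_mul, Finset.sum_mul]
  exact Finset.sum_congr rfl (fun x _ => by ring)

lemma mul_vmv (M : Matrix n n ℂ) (u t : n → ℂ) :
    M * vecMulVec u t = vecMulVec (M *ᵥ u) t := by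
  ext a b
  simp only [mul_apply, vecMulVec_apply, mulVec, dotProduct, Finset.sum_mul]
  exact Finset.sum_congr rfl (fun x _ => by ring)

lemma trace_vmv (u t : n → ℂ) : (vecMulVec u t).trace = t ⬝ᵥ u := by
  simp only [trace, diag, vecMulVec_apply, dotProduct]
  exact Finset.sum_congr rfl (fun x _ => by ring)

lemma vmv_mulVec (u t x : n → ℂ) : vecMulVec u t *ᵥ x = (t ⬝ᵥ x) • u := by
  ext a
  simp only [mulVec, vecMulVec_apply, dotProduct, Pi.smul_apply, smul_eq_mul, Finset.sum_mul]
  exact Finset.sum_congr rfl (fun x _ => by ring)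

lemma eigen_orth {A : Matrix n n ℂ} (hA : A.IsHermitian) (i j : n) :
    star ⇑(hA.eigenvectorBasis i) ⬝ᵥ ⇑(hA.eigenvectorBasis j) = if i = j then 1 else 0 := by
  have h := orthonormal_iff_ite.mp hA.eigenvectorBasis.orthonormal i j
  rw [EuclideanSpace.inner_eq_star_dotProduct] at h
  rw [dotProduct_comm]
  exact h

lemma eigen_complete {A : Matrix n n ℂ} (hA : A.IsHermitian) :
    ∑ i, vecMulVec ⇑(hA.eigenvectorBasis i) (star ⇑(hA.eigenvectorBasis i)) = 1 := by
  have h : (hA.eigenvectorUnitary : Matrix n n ℂ) * star (hA.eigenvectorUnitary : Matrix n n ℂ) = 1 :=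
    Unitary.coe_mul_star_self _
  ext a b
  rw [← h]
  simp only [Finset.sum_apply, vecMulVec_apply, mul_apply, Pi.star_apply, star_apply,
    IsHermitian.eigenvectorUnitary_apply]
  rw [Matrix.sum_apply]
  simp [vecMulVec_apply]
/-- The `i`-th eigenvector of a Hermitian matrix, as a plain function. -/
noncomputable def evec {A : Matrix n n ℂ} (hA : A.IsHermitian) (i : n) : n → ℂ :=
  ⇑(hA.eigenvectorBasis i)

lemma evec_mulVec {A : Matrix n n ℂ} (hA : A.IsHermitian) (i : n) :
    A *ᵥ evec hA i = (hA.eigenvalues i : ℂ) • evec hA i := by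
  have h := hA.mulVec_eigenvectorBasis i
  ext a
  have := congrFun h a
  simpa [evec, Complex.real_smul] using this

lemma evec_orth {A : Matrix n n ℂ} (hA : A.IsHermitian) (i j : n) :
    star (evec hA i) ⬝ᵥ evec hA j = if i = j then 1 else 0 := eigen_orth hA i j

lemma evec_complete {A : Matrix n n ℂ} (hA : A.IsHermitian) :
    ∑ i, vecMulVec (evec hA i) (star (evec hA i)) = 1 := eigen_complete hA

lemma matFun_def (f : ℝ → ℝ) {A : Matrix n n ℂ} (hA : A.IsHermitian) :
    matFun f hA = ∑ i, (f (hA.eigenvalues i) : ℂ) •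
      vecMulVec (evec hA i) (star (evec hA i)) := rfl

lemma fDelta_def (f : ℝ → ℝ) {ρ σ : Matrix n n ℂ} (hρ : ρ.IsHermitian)
    (hσ : σ.IsHermitian) (X : Matrix n n ℂ) :
    fDelta f hρ hσ X = ∑ j, ∑ k, (f (hσ.eigenvalues k / hρ.eigenvalues j) : ℂ) •
      (vecMulVec (evec hσ k) (star (evec hσ k)) * X *
        vecMulVec (evec hρ j) (star (evec hρ j))) := rfl

lemma sum_mulVec' {κ : Type*} [Fintype κ] (M : κ → Matrix n n ℂ) (x : n → ℂ) :
    (∑ i, M i) *ᵥ x = ∑ i, M i *ᵥ x := by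
  ext a
  simp only [mulVec, dotProduct, Matrix.sum_apply, Finset.sum_apply, Finset.sum_mul]
  exact Finset.sum_comm

lemma vmv_mul (u s : n → ℂ) (X : Matrix n n ℂ) :
    vecMulVec u s * X = vecMulVec u (s ᵥ* X) := by
  ext a b
  simp only [mul_apply, vecMulVec_apply, vecMul, dotProduct]
  rw [Finset.mul_sum]
  exact Finset.sum_congr rfl (fun x _ => by ring)

lemma trace_sum_vmv_mul {κ : Type*} [Fintype κ] (c : κ → ℂ) (w : κ → n → ℂ)
    (X : Matrix n n ℂ) :
    ((∑ i, c i • vecMulVec (w i) (star (w i))) * X).trace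
      = ∑ i, c i * (star (w i) ⬝ᵥ (X *ᵥ w i)) := by
  rw [Finset.sum_mul, trace_sum]
  refine Finset.sum_congr rfl (fun i _ => ?_)
  rw [smul_mul_assoc, trace_smul, vmv_mul, trace_vmv, smul_eq_mul, ← dotProduct_mulVec]

lemma spectral_sum {A : Matrix n n ℂ} (hA : A.IsHermitian) :
    A = ∑ i, (hA.eigenvalues i : ℂ) • vecMulVec (evec hA i) (star (evec hA i)) := by
  calc A = A * ∑ i, vecMulVec (evec hA i) (star (evec hA i)) := by
        rw [evec_complete, mul_one]
    _ = _ := by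
        rw [Finset.mul_sum]
        refine Finset.sum_congr rfl (fun i _ => ?_)
        rw [mul_vmv, evec_mulVec]
        ext a b
        simp [vecMulVec_apply]
        ring

lemma matFun_mulVec (g : ℝ → ℝ) {A : Matrix n n ℂ} (hA : A.IsHermitian) (j : n) :
    matFun g hA *ᵥ evec hA j = (g (hA.eigenvalues j) : ℂ) • evec hA j := by
  rw [matFun_def, sum_mulVec']
  rw [Finset.sum_eq_single j]
  · rw [smul_mulVec, vmv_mulVec, evec_orth, if_pos rfl, one_smul]
  · intro i _ hij
    rw [smul_mulVec, vmv_mulVec, evec_orth, if_neg hij, zero_smul, smul_zero]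
  · intro h; exact absurd (Finset.mem_univ j) h

lemma sqrt_mulVec {A : Matrix n n ℂ} (hA : A.PosSemidef) (j : n) :
    hA.sqrt *ᵥ evec hA.1 j = (Real.sqrt (hA.1.eigenvalues j) : ℂ) • evec hA.1 j := by
  have h1 : (star (hA.1.eigenvectorUnitary : Matrix n n ℂ)) *ᵥ evec hA.1 j = Pi.single j 1 :=
    hA.1.star_eigenvectorUnitary_mulVec j
  have h2 : (hA.1.eigenvectorUnitary : Matrix n n ℂ) *ᵥ Pi.single j 1 = evec hA.1 j :=
    hA.1.eigenvectorUnitary_mulVec j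
  rw [Matrix.PosSemidef.sqrt, ← mulVec_mulVec, ← mulVec_mulVec, h1,
    Matrix.diagonal_mulVec_single]
  have h3 : (Pi.single j (((√(hA.1.eigenvalues j) : ℝ) : ℂ) * 1) : n → ℂ)
      = (Real.sqrt (hA.1.eigenvalues j) : ℂ) • (Pi.single j 1 : n → ℂ) := by
    ext x
    rcases eq_or_ne x j with h | h
    · subst h; simp
    · simp [Pi.single_eq_of_ne h]
  rw [h3, mulVec_smul, h2]

lemma matFun_eq_sum {κ : Type*} [Fintype κ] (g : ℝ → ℝ) {A : Matrix n n ℂ}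
    (hA : A.IsHermitian) (w : κ → n → ℂ) (μ : κ → ℝ)
    (hw : ∀ i, A *ᵥ w i = (μ i : ℂ) • w i)
    (hc : ∑ i, vecMulVec (w i) (star (w i)) = 1) :
    matFun g hA = ∑ i, (g (μ i) : ℂ) • vecMulVec (w i) (star (w i)) := by
  have key : ∀ (i : κ) (j : n),
      (g (hA.eigenvalues j) : ℂ) * (star (w i) ⬝ᵥ evec hA j)
        = (g (μ i) : ℂ) * (star (w i) ⬝ᵥ evec hA j) := by
    intro i j
    set c := star (w i) ⬝ᵥ evec hA j with hc'
    have e1 : star (w i) ⬝ᵥ (A *ᵥ evec hA j) = (hA.eigenvalues j : ℂ) * c := by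
      rw [evec_mulVec, dotProduct_smul, smul_eq_mul]
    have e2 : star (w i) ⬝ᵥ (A *ᵥ evec hA j) = (μ i : ℂ) * c := by
      rw [dotProduct_mulVec]
      have h3 : star (w i) ᵥ* A = (μ i : ℂ) • star (w i) := by
        have h4 := congrArg star (hw i)
        rw [star_mulVec, hA.eq] at h4
        rw [h4]
        ext x
        simp [mul_comm]
      rw [h3, smul_dotProduct, smul_eq_mul]
    have h5 : (hA.eigenvalues j : ℂ) * c = (μ i : ℂ) * c := by rw [← e1, e2]
    rcases eq_or_ne c 0 with h | h
    · rw [h, mul_zero, mul_zero]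
    · have := mul_right_cancel₀ h h5
      rw [Complex.ofReal_inj.mp this]
  calc matFun g hA = (∑ i, vecMulVec (w i) (star (w i))) * matFun g hA := by rw [hc, one_mul]
    _ = ∑ i, ∑ j, ((g (hA.eigenvalues j) : ℂ) * (star (w i) ⬝ᵥ evec hA j)) •
          vecMulVec (w i) (star (evec hA j)) := by
        rw [Finset.sum_mul]
        refine Finset.sum_congr rfl (fun i _ => ?_)
        rw [matFun_def, Finset.mul_sum]
        refine Finset.sum_congr rfl (fun j _ => ?_)
        rw [mul_smul_comm, vmv_mul_vmv, smul_smul, mul_comm]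
    _ = ∑ i, (g (μ i) : ℂ) • (vecMulVec (w i) (star (w i)) *
          ∑ j, vecMulVec (evec hA j) (star (evec hA j))) := by
        refine Finset.sum_congr rfl (fun i _ => ?_)
        rw [Finset.mul_sum, Finset.smul_sum]
        refine Finset.sum_congr rfl (fun j _ => ?_)
        rw [key i j, vmv_mul_vmv, smul_smul]
    _ = _ := by
        refine Finset.sum_congr rfl (fun i _ => ?_)
        rw [evec_complete, mul_one]
lemma star_dot_mulVec (u v : n → ℂ) (X : Matrix n n ℂ) :
    star v ⬝ᵥ (Xᴴ *ᵥ u) = star (star u ⬝ᵥ (X *ᵥ v)) := by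
  simp only [dotProduct, mulVec, conjTranspose_apply, star_sum, star_mul', Pi.star_apply,
    Finset.mul_sum, Finset.sum_mul, star_star]
  rw [Finset.sum_comm]
  refine Finset.sum_congr rfl (fun x _ => Finset.sum_congr rfl (fun y _ => by ring))

lemma trace_term (X : Matrix n n ℂ) (u v : n → ℂ) :
    (Xᴴ * (vecMulVec u (star u) * X * vecMulVec v (star v))).trace
      = ((Complex.normSq (star u ⬝ᵥ (X *ᵥ v)) : ℝ) : ℂ) := by
  rw [vmv_mul, vmv_mul_vmv, mul_smul_comm, mul_vmv, trace_smul, trace_vmv, smul_eq_mul,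
    star_dot_mulVec, ← dotProduct_mulVec]
  rw [show star (star u ⬝ᵥ (X *ᵥ v)) = (starRingEnd ℂ) (star u ⬝ᵥ (X *ᵥ v)) from rfl,
    Complex.mul_conj]

lemma quasi_formula (f g : ℝ → ℝ) {ρ σ : Matrix n n ℂ} (hρ : ρ.PosDef) (hσ : σ.PosDef) :
    quasiEntropy f (matFun g hρ.1) hρ hσ
      = ∑ j, ∑ k, f (hσ.1.eigenvalues k / hρ.1.eigenvalues j)
          * (hρ.1.eigenvalues j * (g (hρ.1.eigenvalues j))^2)
          * Complex.normSq (star (evec hσ.1 k) ⬝ᵥ evec hρ.1 j) := by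
  set X := matFun g hρ.1 * hρ.posSemidef.sqrt with hX
  have hXv : ∀ j, X *ᵥ evec hρ.1 j
      = ((Real.sqrt (hρ.1.eigenvalues j) * g (hρ.1.eigenvalues j) : ℝ) : ℂ) • evec hρ.1 j := by
    intro j
    rw [hX, ← mulVec_mulVec]
    have h1 : hρ.posSemidef.sqrt *ᵥ evec hρ.1 j
        = (Real.sqrt (hρ.1.eigenvalues j) : ℂ) • evec hρ.1 j := sqrt_mulVec hρ.posSemidef j
    rw [h1, mulVec_smul, matFun_mulVec, smul_smul, Complex.ofReal_mul, mul_comm]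
  have key : (Xᴴ * fDelta f hρ.1 hσ.1 X).trace
      = ((∑ j, ∑ k, f (hσ.1.eigenvalues k / hρ.1.eigenvalues j)
          * (hρ.1.eigenvalues j * (g (hρ.1.eigenvalues j))^2)
          * Complex.normSq (star (evec hσ.1 k) ⬝ᵥ evec hρ.1 j) : ℝ) : ℂ) := by
    rw [fDelta_def]
    rw [Finset.mul_sum, trace_sum]
    rw [Complex.ofReal_sum]
    refine Finset.sum_congr rfl (fun j _ => ?_)
    rw [Finset.mul_sum, trace_sum, Complex.ofReal_sum]
    refine Finset.sum_congr rfl (fun k _ => ?_)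
    rw [mul_smul_comm, trace_smul, smul_eq_mul, trace_term]
    have hc : star (evec hσ.1 k) ⬝ᵥ (X *ᵥ evec hρ.1 j)
        = ((Real.sqrt (hρ.1.eigenvalues j) * g (hρ.1.eigenvalues j) : ℝ) : ℂ)
            * (star (evec hσ.1 k) ⬝ᵥ evec hρ.1 j) := by
      rw [hXv j, dotProduct_smul, smul_eq_mul]
    rw [hc, Complex.normSq_mul, Complex.normSq_ofReal]
    rw [Complex.ofReal_mul, Complex.ofReal_mul]
    have hr : (Real.sqrt (hρ.1.eigenvalues j) * g (hρ.1.eigenvalues j))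
          * (Real.sqrt (hρ.1.eigenvalues j) * g (hρ.1.eigenvalues j))
        = hρ.1.eigenvalues j * (g (hρ.1.eigenvalues j))^2 := by
      have := Real.mul_self_sqrt (hρ.posSemidef.eigenvalues_nonneg j)
      nlinarith [this]
    rw [← Complex.ofReal_mul, hr]
    push_cast
    ring
  rw [quasiEntropy, ← hX, key, Complex.ofReal_re]
lemma lnq_key {q x y : ℝ} (hx : 0 < x) (hy : 0 < y) :
    -lnq q (y / x) * x ^ (q - 1) = lnq q x - lnq q y := by
  unfold lnq
  by_cases hq1 : q = 1
  · rw [if_pos hq1, if_pos hq1, if_pos hq1, hq1, sub_self, Real.rpow_zero,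
      Real.log_div hy.ne' hx.ne']
    ring
  · rw [if_neg hq1, if_neg hq1, if_neg hq1]
    have hxq : (0:ℝ) < x ^ (q - 1) := Real.rpow_pos_of_pos hx _
    have hd : (y / x) ^ (q - 1) = y ^ (q - 1) / x ^ (q - 1) :=
      Real.div_rpow hy.le hx.le _
    rw [hd]
    have hq1' : q - 1 ≠ 0 := sub_ne_zero.mpr hq1
    field_simp
    ring

lemma rpow_half_sq {q x : ℝ} (hx : 0 < x) :
    (x ^ ((q - 1) / 2)) ^ 2 = x ^ (q - 1) := by
  rw [← Real.rpow_natCast (x ^ ((q - 1) / 2)) 2, ← Real.rpow_mul hx.le]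
  norm_num

lemma lnq_term {q x μ : ℝ} (hx : 0 < x) (hμ : 0 < μ) :
    -lnq q (μ / x) * (x * (x ^ ((q - 1) / 2)) ^ 2) = x * lnq q x - x * lnq q μ := by
  rw [rpow_half_sq hx]
  have := lnq_key (q := q) hx hμ
  nlinarith [this]

lemma star_dot (u v : n → ℂ) : star (star u ⬝ᵥ v) = star v ⬝ᵥ u := by
  simp only [dotProduct, star_sum, star_mul', Pi.star_apply, star_star]
  exact Finset.sum_congr rfl (fun x _ => by ring)

lemma dot_sum {κ : Type*} [Fintype κ] (u : n → ℂ) (f : κ → n → ℂ) :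
    u ⬝ᵥ (∑ i, f i) = ∑ i, u ⬝ᵥ f i := by
  simp only [dotProduct, Finset.sum_apply, Finset.mul_sum]
  exact Finset.sum_comm

lemma normSq_cast (d : ℂ) : ((Complex.normSq d : ℝ) : ℂ) = d * star d := by
  rw [show (star d : ℂ) = (starRingEnd ℂ) d from rfl, Complex.mul_conj]

lemma sum_normSq_one {ρ σ : Matrix n n ℂ} (hρ : ρ.IsHermitian) (hσ : σ.IsHermitian) (j : n) :
    ∑ k, Complex.normSq (star (evec hσ k) ⬝ᵥ evec hρ j) = 1 := by
  have key : ∀ k : n, ((Complex.normSq (star (evec hσ k) ⬝ᵥ evec hρ j) : ℝ) : ℂ)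
      = star (evec hρ j) ⬝ᵥ (vecMulVec (evec hσ k) (star (evec hσ k)) *ᵥ evec hρ j) := by
    intro k
    rw [vmv_mulVec, dotProduct_smul, smul_eq_mul, normSq_cast, star_dot]
  have hC : ∑ k, ((Complex.normSq (star (evec hσ k) ⬝ᵥ evec hρ j) : ℝ) : ℂ) = 1 := by
    rw [Finset.sum_congr rfl (fun k _ => key k), ← dot_sum, ← sum_mulVec',
      evec_complete, one_mulVec, evec_orth, if_pos rfl]
  have := congrArg Complex.re hC
  rw [← Complex.ofReal_sum] at this
  simpa using this

lemma sum_eig_normSq {ρ σ : Matrix n n ℂ} (hρ : ρ.IsHermitian) (hσ : σ.IsHermitian) (k : n) :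
    ∑ j, hρ.eigenvalues j * Complex.normSq (star (evec hσ k) ⬝ᵥ evec hρ j)
      = (star (evec hσ k) ⬝ᵥ (ρ *ᵥ evec hσ k)).re := by
  have key : ∀ j : n, ((hρ.eigenvalues j * Complex.normSq (star (evec hσ k) ⬝ᵥ evec hρ j) : ℝ) : ℂ)
      = star (evec hσ k) ⬝ᵥ
          (((hρ.eigenvalues j : ℂ) • vecMulVec (evec hρ j) (star (evec hρ j))) *ᵥ evec hσ k) := by
    intro j
    rw [smul_mulVec, vmv_mulVec, dotProduct_smul, dotProduct_smul, smul_eq_mul,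
      smul_eq_mul, Complex.ofReal_mul, normSq_cast, star_dot]
    ring
  have hC : ∑ j, ((hρ.eigenvalues j * Complex.normSq (star (evec hσ k) ⬝ᵥ evec hρ j) : ℝ) : ℂ)
      = star (evec hσ k) ⬝ᵥ (ρ *ᵥ evec hσ k) := by
    rw [Finset.sum_congr rfl (fun j _ => key j), ← dot_sum, ← sum_mulVec', ← spectral_sum]
  have := congrArg Complex.re hC
  rw [← Complex.ofReal_sum] at this
  simpa using this

lemma trace_matFun_mul (g : ℝ → ℝ) {σ : Matrix n n ℂ} (hσ : σ.IsHermitian) (X : Matrix n n ℂ) :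
    (matFun g hσ * X).trace = ∑ k, (g (hσ.eigenvalues k) : ℂ) * (star (evec hσ k) ⬝ᵥ (X *ᵥ evec hσ k)) := by
  rw [matFun_def, trace_sum_vmv_mul]

lemma quasi_eval (q : ℝ) {ρ σ : Matrix n n ℂ} (hρ : ρ.PosDef) (hσ : σ.PosDef) :
    quasiEntropy (fun x => -lnq q x) (matFun (fun x => x ^ ((q - 1) / 2)) hρ.1) hρ hσ
      = (∑ j, hρ.1.eigenvalues j * lnq q (hρ.1.eigenvalues j))
        - ((matFun (lnq q) hσ.1 * ρ).trace).re := by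
  rw [quasi_formula]
  have step1 : ∀ j k : n,
      (fun x => -lnq q x) (hσ.1.eigenvalues k / hρ.1.eigenvalues j)
          * (hρ.1.eigenvalues j * ((fun x => x ^ ((q - 1) / 2)) (hρ.1.eigenvalues j))^2)
          * Complex.normSq (star (evec hσ.1 k) ⬝ᵥ evec hρ.1 j)
        = (hρ.1.eigenvalues j * lnq q (hρ.1.eigenvalues j)
            - hρ.1.eigenvalues j * lnq q (hσ.1.eigenvalues k))
          * Complex.normSq (star (evec hσ.1 k) ⬝ᵥ evec hρ.1 j) := by
    intro j k
    rw [lnq_term (hρ.eigenvalues_pos j) (hσ.eigenvalues_pos k)]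
  rw [Finset.sum_congr rfl (fun j _ => Finset.sum_congr rfl (fun k _ => step1 j k))]
  have step2 : ∑ j, ∑ k : n,
      (hρ.1.eigenvalues j * lnq q (hρ.1.eigenvalues j)
        - hρ.1.eigenvalues j * lnq q (hσ.1.eigenvalues k))
        * Complex.normSq (star (evec hσ.1 k) ⬝ᵥ evec hρ.1 j)
      = (∑ j, hρ.1.eigenvalues j * lnq q (hρ.1.eigenvalues j))
        - ∑ k, lnq q (hσ.1.eigenvalues k)
            * (∑ j, hρ.1.eigenvalues j * Complex.normSq (star (evec hσ.1 k) ⬝ᵥ evec hρ.1 j)) := by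
    rw [Finset.sum_comm (γ := n)]
    simp_rw [sub_mul, Finset.sum_sub_distrib]
    congr 1
    · rw [Finset.sum_comm]
      refine Finset.sum_congr rfl (fun j _ => ?_)
      rw [← Finset.mul_sum, sum_normSq_one hρ.1 hσ.1 j, mul_one]
    · refine Finset.sum_congr rfl (fun k _ => ?_)
      rw [Finset.mul_sum]
      refine Finset.sum_congr rfl (fun j _ => ?_)
      ring
  rw [step2]
  congr 1
  rw [trace_matFun_mul]
  rw [Complex.re_sum]
  refine Finset.sum_congr rfl (fun k _ => ?_)
  rw [sum_eig_normSq hρ.1 hσ.1 k, Complex.re_ofReal_mul]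
lemma star_ite01 {P : Prop} [Decidable P] : star (if P then (1:ℂ) else 0) = if P then 1 else 0 := by
  split_ifs <;> simp

lemma sum_ite_ite {α : Type*} [Fintype α] [DecidableEq α] (a b : α) :
    ∑ d : α, (if a = d then (1:ℂ) else 0) * (if d = b then 1 else 0) = if a = b then 1 else 0 := by
  simp only [ite_mul, one_mul, zero_mul]
  rw [Finset.sum_ite_eq Finset.univ a (fun d => if d = b then (1:ℂ) else 0)]
  simp

lemma sum_ite_ite' {α : Type*} [Fintype α] [DecidableEq α] (a b : α) :
    ∑ d : α, (if a = d then (1:ℂ) else 0) * (if b = d then 1 else 0) = if a = b then 1 else 0 := by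
  have : ∀ d : α, (if b = d then (1:ℂ) else 0) = if d = b then 1 else 0 := by
    intro d; simp [eq_comm]
  simp only [this]
  exact sum_ite_ite a b

lemma trace_matFun_self (g : ℝ → ℝ) {B : Matrix n n ℂ} (hB : B.IsHermitian) :
    ((matFun g hB * B).trace).re = ∑ i, g (hB.eigenvalues i) * hB.eigenvalues i := by
  rw [trace_matFun_mul]
  have key : ∀ i : n, (g (hB.eigenvalues i) : ℂ) * (star (evec hB i) ⬝ᵥ (B *ᵥ evec hB i))
      = ((g (hB.eigenvalues i) * hB.eigenvalues i : ℝ) : ℂ) := by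
    intro i
    rw [evec_mulVec, dotProduct_smul, smul_eq_mul, evec_orth, if_pos rfl, mul_one]
    push_cast
    ring
  rw [Finset.sum_congr rfl (fun i _ => key i), ← Complex.ofReal_sum, Complex.ofReal_re]

section tensor

variable {m κ : Type*} [Fintype m] [DecidableEq m] [Fintype κ] [DecidableEq κ]

lemma tensor_trace (e : κ ≃ n × m) {B : Matrix n n ℂ} {σ : Matrix κ κ ℂ}
    (hB : B.IsHermitian) (hσ : σ.IsHermitian)
    (hform : ∀ x y, σ x y = B (e x).1 (e y).1 * (if (e x).2 = (e y).2 then 1 else 0))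
    (g : ℝ → ℝ) (X : Matrix κ κ ℂ) :
    (matFun g hσ * X).trace
      = (matFun g hB * Matrix.of (fun a b => ∑ c : m, X (e.symm (a, c)) (e.symm (b, c)))).trace := by
  set X' : Matrix n n ℂ := Matrix.of (fun a b => ∑ c : m, X (e.symm (a, c)) (e.symm (b, c))) with hX'
  set w : n × m → κ → ℂ :=
    fun p x => evec hB p.1 (e x).1 * (if (e x).2 = p.2 then 1 else 0) with hwdef
  have hw : ∀ p, σ *ᵥ w p = ((hB.eigenvalues p.1 : ℝ) : ℂ) • w p := by
    intro p
    ext x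
    show ∑ y, σ x y * w p y = _
    rw [← Equiv.sum_comp e.symm (fun y => σ x y * w p y), Fintype.sum_prod_type]
    have h1 : ∀ (b : n) (d : m), σ x (e.symm (b, d)) * w p (e.symm (b, d))
        = (B (e x).1 b * evec hB p.1 b) *
          ((if (e x).2 = d then 1 else 0) * (if d = p.2 then 1 else 0)) := by
      intro b d
      rw [hform, hwdef]
      simp only [Equiv.apply_symm_apply]
      ring
    rw [Finset.sum_congr rfl (fun b _ => Finset.sum_congr rfl (fun d _ => h1 b d))]
    have h2 : ∀ b : n, ∑ d : m, (B (e x).1 b * evec hB p.1 b) *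
          ((if (e x).2 = d then 1 else 0) * (if d = p.2 then 1 else 0))
        = (B (e x).1 b * evec hB p.1 b) * (if (e x).2 = p.2 then 1 else 0) := by
      intro b
      rw [← Finset.mul_sum]
      congr 1
      exact sum_ite_ite ((e x).2) p.2
    rw [Finset.sum_congr rfl (fun b _ => h2 b)]
    have h3 : (∑ b, (B (e x).1 b * evec hB p.1 b)) = (B *ᵥ evec hB p.1) (e x).1 := rfl
    rw [← Finset.sum_mul, h3, evec_mulVec]
    simp only [Pi.smul_apply, smul_eq_mul, hwdef]
    ring
  have hcomp : ∑ p, vecMulVec (w p) (star (w p)) = 1 := by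
    ext x y
    rw [Matrix.sum_apply]
    have h1 : ∀ p : n × m, vecMulVec (w p) (star (w p)) x y
        = (evec hB p.1 (e x).1 * star (evec hB p.1 (e y).1)) *
          ((if (e x).2 = p.2 then 1 else 0) * (if (e y).2 = p.2 then 1 else 0)) := by
      intro p
      rw [vecMulVec_apply, hwdef]
      simp only [Pi.star_apply, star_mul', star_ite01]
      ring
    rw [Finset.sum_congr rfl (fun p _ => h1 p), Fintype.sum_prod_type]
    have h2 : ∀ i : n, ∑ c : m, (evec hB i (e x).1 * star (evec hB i (e y).1)) *
          ((if (e x).2 = c then 1 else 0) * (if (e y).2 = c then 1 else 0))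
        = (evec hB i (e x).1 * star (evec hB i (e y).1)) *
            (if (e x).2 = (e y).2 then 1 else 0) := by
      intro i
      rw [← Finset.mul_sum]
      congr 1
      exact sum_ite_ite' ((e x).2) ((e y).2)
    rw [Finset.sum_congr rfl (fun i _ => h2 i), ← Finset.sum_mul]
    have h3 : (∑ i, evec hB i (e x).1 * star (evec hB i (e y).1))
        = (1 : Matrix n n ℂ) (e x).1 (e y).1 := by
      have := congrFun (congrFun (evec_complete hB) (e x).1) (e y).1
      rw [← this, Matrix.sum_apply]
      exact Finset.sum_congr rfl (fun i _ => by rw [vecMulVec_apply]; rfl)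
    rw [h3]
    rcases eq_or_ne x y with h | h
    · subst h
      simp [Matrix.one_apply]
    · have hxy : e x ≠ e y := fun hc => h (e.injective hc)
      rw [Matrix.one_apply_ne h]
      rcases eq_or_ne (e x).1 (e y).1 with h4 | h4
      · have h5 : (e x).2 ≠ (e y).2 := fun hc => hxy (Prod.ext h4 hc)
        rw [if_neg h5, mul_zero]
      · rw [Matrix.one_apply_ne h4, zero_mul]
  rw [matFun_eq_sum g hσ w (fun p => hB.eigenvalues p.1) hw hcomp, trace_sum_vmv_mul,
    trace_matFun_mul, Fintype.sum_prod_type]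
  refine Finset.sum_congr rfl (fun i _ => ?_)
  rw [show (∑ y : m, (g (hB.eigenvalues (i, y).1) : ℂ) * (star (w (i, y)) ⬝ᵥ X *ᵥ w (i, y)))
    = ∑ y : m, (g (hB.eigenvalues i) : ℂ) * (star (w (i, y)) ⬝ᵥ X *ᵥ w (i, y)) from rfl,
    ← Finset.mul_sum]
  congr 1
  -- ∑ c, star (w (i,c)) ⬝ᵥ (X *ᵥ w (i,c)) = star (evec hB i) ⬝ᵥ (X' *ᵥ evec hB i)
  have hXw : ∀ (c : m) (z : κ), (X *ᵥ w (i, c)) z = ∑ b, X z (e.symm (b, c)) * evec hB i b := by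
    intro c z
    show ∑ y, X z y * w (i, c) y = _
    rw [← Equiv.sum_comp e.symm (fun y => X z y * w (i, c) y), Fintype.sum_prod_type]
    have h1 : ∀ (b : n) (d : m), X z (e.symm (b, d)) * w (i, c) (e.symm (b, d))
        = (X z (e.symm (b, d)) * evec hB i b) * (if d = c then 1 else 0) := by
      intro b d
      rw [hwdef]
      simp only [Equiv.apply_symm_apply]
      ring
    rw [Finset.sum_congr rfl (fun b _ => Finset.sum_congr rfl (fun d _ => h1 b d))]
    refine Finset.sum_congr rfl (fun b _ => ?_)
    simp only [mul_ite, mul_one, mul_zero]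
    rw [Finset.sum_ite_eq' (Finset.univ) c (fun d => X z (e.symm (b, d)) * evec hB i b)]
    simp
  have hmain : ∀ c : m, star (w (i, c)) ⬝ᵥ (X *ᵥ w (i, c))
      = ∑ a, ∑ b, star (evec hB i a) * X (e.symm (a, c)) (e.symm (b, c)) * evec hB i b := by
    intro c
    show ∑ x, star (w (i, c) x) * (X *ᵥ w (i, c)) x = _
    rw [← Equiv.sum_comp e.symm (fun x => star (w (i, c) x) * (X *ᵥ w (i, c)) x),
      Fintype.sum_prod_type]
    have h1 : ∀ (a : n) (c1 : m), star (w (i, c) (e.symm (a, c1))) * (X *ᵥ w (i, c)) (e.symm (a, c1))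
        = (star (evec hB i a) * (X *ᵥ w (i, c)) (e.symm (a, c1))) * (if c1 = c then 1 else 0) := by
      intro a c1
      rw [hwdef]
      simp only [Equiv.apply_symm_apply, star_mul', star_ite01]
      ring
    rw [Finset.sum_congr rfl (fun a _ => Finset.sum_congr rfl (fun c1 _ => h1 a c1))]
    refine Finset.sum_congr rfl (fun a _ => ?_)
    simp only [mul_ite, mul_one, mul_zero]
    rw [Finset.sum_ite_eq' (Finset.univ) c
      (fun c1 => star (evec hB i a) * (X *ᵥ w (i, c)) (e.symm (a, c1)))]
    simp only [Finset.mem_univ, if_pos]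
    rw [hXw c (e.symm (a, c)), Finset.mul_sum]
    refine Finset.sum_congr rfl (fun b _ => by ring)
  rw [Finset.sum_congr rfl (fun c _ => hmain c)]
  have hrhs : star (evec hB i) ⬝ᵥ (X' *ᵥ evec hB i)
      = ∑ a, ∑ b, ∑ c : m, star (evec hB i a) * X (e.symm (a, c)) (e.symm (b, c)) * evec hB i b := by
    show ∑ a, star (evec hB i a) * (X' *ᵥ evec hB i) a = _
    refine Finset.sum_congr rfl (fun a _ => ?_)
    show star (evec hB i a) * (∑ b, X' a b * evec hB i b) = _
    rw [Finset.mul_sum]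
    refine Finset.sum_congr rfl (fun b _ => ?_)
    rw [hX']
    show star (evec hB i a) * ((∑ c : m, X (e.symm (a, c)) (e.symm (b, c))) * evec hB i b) = _
    rw [Finset.sum_mul, Finset.mul_sum]
    refine Finset.sum_congr rfl (fun c _ => by ring)
  rw [hrhs]
  rw [Finset.sum_comm]
  refine Finset.sum_congr rfl (fun a _ => ?_)
  rw [Finset.sum_comm]

end tensor

/-- Theorem 1: the strong subadditivity inequality of the Tsallis entropy is equivalent to a
quasi-entropy inequality: `S_q(ρ₁₂₃)+S_q(ρ₂) ≤ S_q(ρ₁₂)+S_q(ρ₂₃)` iff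
`S_{-ln_q}^U(ρ₁₂₃||ρ₁₂⊗I₃) ≥ S_{-ln_q}^V(ρ₂₃||ρ₂⊗I₃)`, where `U = ρ₁₂₃^{(q-1)/2}` and
`V = ρ₂₃^{(q-1)/2}`. -/
theorem tsallis_ssa_iff_quasiEntropy (q : ℝ) (hq : 0 < q) {d1 d2 d3 : ℕ}
    (ρ : Matrix (Fin d1 × Fin d2 × Fin d3) (Fin d1 × Fin d2 × Fin d3) ℂ)
    (hρ : ρ.PosDef) (htr : ρ.trace = 1)
    (h12 : (ptrace3 ρ).PosDef) (h23 : (ptrace1 ρ).PosDef) (h2 : (ptrace13 ρ).PosDef)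
    (h12I : (tensorI3 (ptrace3 ρ)).PosDef)
    (h2I : ((ptrace13 ρ) ⊗ₖ (1 : Matrix (Fin d3) (Fin d3) ℂ)).PosDef) :
    tsallisEntropy q hρ.1 + tsallisEntropy q h2.1 ≤
        tsallisEntropy q h12.1 + tsallisEntropy q h23.1 ↔
      quasiEntropy (fun x => -lnq q x) (matFun (fun x => x ^ ((q - 1) / 2)) hρ.1) hρ h12I ≥
        quasiEntropy (fun x => -lnq q x) (matFun (fun x => x ^ ((q - 1) / 2)) h23.1) h23 h2I := by
  
  classical
  set e1 : (Fin d1 × Fin d2 × Fin d3) ≃ (Fin d1 × Fin d2) × Fin d3 :=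
    (Equiv.prodAssoc (Fin d1) (Fin d2) (Fin d3)).symm with he1
  have hform1 : ∀ x y, tensorI3 (ptrace3 ρ) x y
      = (ptrace3 ρ) (e1 x).1 (e1 y).1 * (if (e1 x).2 = (e1 y).2 then 1 else 0) :=
    fun x y => rfl
  have hX1 : Matrix.of (fun a b => ∑ c : Fin d3, ρ (e1.symm (a, c)) (e1.symm (b, c)))
      = ptrace3 ρ := rfl
  have t1 : ((matFun (lnq q) h12I.1 * ρ).trace).re
      = ∑ i, h12.1.eigenvalues i * lnq q (h12.1.eigenvalues i) := by
    rw [tensor_trace e1 h12.1 h12I.1 hform1 (lnq q) ρ, hX1, trace_matFun_self (lnq q) h12.1]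
    exact Finset.sum_congr rfl (fun i _ => mul_comm _ _)
  have q1 : quasiEntropy (fun x => -lnq q x) (matFun (fun x => x ^ ((q - 1) / 2)) hρ.1) hρ h12I
      = (∑ j, hρ.1.eigenvalues j * lnq q (hρ.1.eigenvalues j))
        - ∑ i, h12.1.eigenvalues i * lnq q (h12.1.eigenvalues i) := by
    rw [quasi_eval q hρ h12I, t1]
  set e2 : (Fin d2 × Fin d3) ≃ (Fin d2) × Fin d3 := Equiv.refl _ with he2
  have hform2 : ∀ x y, ((ptrace13 ρ) ⊗ₖ (1 : Matrix (Fin d3) (Fin d3) ℂ)) x y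
      = (ptrace13 ρ) (e2 x).1 (e2 y).1 * (if (e2 x).2 = (e2 y).2 then 1 else 0) := by
    intro x y
    simp [Matrix.kroneckerMap_apply, Matrix.one_apply, he2]
  have hX2 : Matrix.of (fun a b => ∑ c : Fin d3, (ptrace1 ρ) (e2.symm (a, c)) (e2.symm (b, c)))
      = ptrace13 ρ := by
    ext a b
    show ∑ c : Fin d3, (ptrace1 ρ) (a, c) (b, c) = ptrace13 ρ a b
    unfold ptrace1 ptrace13
    exact Finset.sum_comm
  have t2 : ((matFun (lnq q) h2I.1 * ptrace1 ρ).trace).re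
      = ∑ i, h2.1.eigenvalues i * lnq q (h2.1.eigenvalues i) := by
    rw [tensor_trace e2 h2.1 h2I.1 hform2 (lnq q) (ptrace1 ρ), hX2,
      trace_matFun_self (lnq q) h2.1]
    exact Finset.sum_congr rfl (fun i _ => mul_comm _ _)
  have q2 : quasiEntropy (fun x => -lnq q x) (matFun (fun x => x ^ ((q - 1) / 2)) h23.1) h23 h2I
      = (∑ j, h23.1.eigenvalues j * lnq q (h23.1.eigenvalues j))
        - ∑ i, h2.1.eigenvalues i * lnq q (h2.1.eigenvalues i) := by
    rw [quasi_eval q h23 h2I, t2]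
  rw [ge_iff_le, q1, q2]
  unfold tsallisEntropy
  constructor <;> intro h <;> linarith
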